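/- For every real z > 0 and every integer j ≥ 1, ∫₀^∞ (1/a)·e^{−z/(2a)} (z/(2a))^{j+1} / (a·j!) da − ∫₀^∞ (1/a)·e^{−z/(2a)} (z/(2a))^j / (a·(j−1)!) da = 2/z. That is, E[1/M_{j+1}] − E[1/M_j] = 2/z, a quantity independent of j. -/

import Mathlib

open MeasureTheory Real Set

lemma gamma_step (m : ℕ) :
    ∫ x in Ioi (0:ℝ), Real.exp (-x) * x ^ (m + 1) / (Nat.factorial m) = (m + 1 : ℝ) := by
  have h1 : ∫ x in Ioi (0:ℝ), Real.exp (-x) * x ^ (m + 1) = (Nat.factorial (m+1) : ℝ) := by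
    have := Real.Gamma_eq_integral (s := (m + 2 : ℝ)) (by positivity)
    rw [show ((m:ℝ) + 2) = ((m + 1 : ℕ) : ℝ) + 1 by push_cast; ring, Real.Gamma_nat_eq_factorial] at this
    rw [this]
    apply setIntegral_congr_fun measurableSet_Ioi
    intro x hx
    simp only []
    rw [show ((m + 1 : ℕ) : ℝ) + 1 - 1 = ((m + 1 : ℕ) : ℝ) by ring]
    rw [Real.rpow_natCast]
  simp_rw [div_eq_mul_inv, integral_mul_const, h1]
  rw [Nat.factorial_succ]
  push_cast
  field_simp

lemma key (z : ℝ) (hz : 0 < z) (m : ℕ) :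
    (∫ a in Ioi (0:ℝ),
        (1 / a) * (Real.exp (-z / (2 * a)) * (z / (2 * a)) ^ (m + 1) / (a * (Nat.factorial m))))
      = 2 * (m + 1) / z := by
  set f : ℝ → ℝ := fun a =>
    (1 / a) * (Real.exp (-z / (2 * a)) * (z / (2 * a)) ^ (m + 1) / (a * (Nat.factorial m))) with hf
  have hsub : (∫ x in Ioi (0:ℝ), (|(-1:ℝ)| * x ^ ((-1:ℝ) - 1)) • f (x ^ (-1:ℝ)))
      = ∫ a in Ioi (0:ℝ), f a := integral_comp_rpow_Ioi f (by norm_num)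
  rw [← hsub]
  have heq : ∀ x ∈ Ioi (0:ℝ), (|(-1:ℝ)| * x ^ ((-1:ℝ) - 1)) • f (x ^ (-1:ℝ))
      = Real.exp (-((z/2) * x)) * ((z/2) * x) ^ (m + 1) / (Nat.factorial m) := by
    intro x hx
    have hx0 : (0:ℝ) < x := hx
    have hxinv : x ^ (-1:ℝ) = x⁻¹ := by rw [Real.rpow_neg hx0.le, Real.rpow_one]
    have hx2 : x ^ ((-1:ℝ) - 1) = x⁻¹ * x⁻¹ := by
      rw [show ((-1:ℝ) - 1) = -(2:ℝ) by ring, Real.rpow_neg hx0.le]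
      rw [show (2:ℝ) = ((2:ℕ):ℝ) by norm_num, Real.rpow_natCast]
      rw [sq, mul_inv]
    have harg : -z / (2 * x⁻¹) = -((z/2) * x) := by field_simp
    have harg2 : z / (2 * x⁻¹) = (z/2) * x := by field_simp
    rw [hf]
    simp only [hxinv, smul_eq_mul, harg, harg2, abs_neg, abs_one, one_mul, hx2, inv_inv,
      one_div]
    field_simp
  rw [setIntegral_congr_fun measurableSet_Ioi heq]
  have hb : (0:ℝ) < z / 2 := by positivity
  have := integral_comp_mul_left_Ioi
    (fun u => Real.exp (-u) * u ^ (m + 1) / (Nat.factorial m)) 0 hb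
  simp only [mul_zero] at this
  rw [this, gamma_step m, smul_eq_mul]
  field_simp

theorem expectation_inv_Mj_difference (z : ℝ) (hz : 0 < z) (j : ℕ) (hj : 1 ≤ j) :
    (∫ a in Set.Ioi (0:ℝ),
        (1 / a) * (Real.exp (-z / (2 * a)) * (z / (2 * a)) ^ (j + 1) / (a * (Nat.factorial j))))
      - (∫ a in Set.Ioi (0:ℝ),
        (1 / a) * (Real.exp (-z / (2 * a)) * (z / (2 * a)) ^ j / (a * (Nat.factorial (j - 1)))))
      = 2 / z := by
  obtain ⟨m, rfl⟩ : ∃ m, j = m + 1 := ⟨j - 1, (Nat.succ_pred_eq_of_pos hj).symm⟩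
  rw [key z hz (m + 1), Nat.add_sub_cancel, key z hz m]
  push_cast
  field_simp
  ring
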